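/- Let P and S be languages over Σ with S nonempty, let Σuo ⊆ Σuc ⊆ Σ, and suppose the equation P ∩ X = S has a prefix-closed solution. Let Z = Init(S) · Σuc*, where Σuc* is the language of all words whose letters all lie in Σuc and · is concatenation of languages (Z is nonempty and prefix-closed). Then the equation has a prefix-closed solution under partial controllability and observability (a prefix-closed C with P ∩ C = S and P ∩ Ext(Fold(C)) = S) if and only if Real(Z) ⊆ compl(P) ∪ S. -/

import Mathlib

/-!
Supervisory control via language equation solving: common definitions.
A language over alphabet `α` is a set of finite words `Set (List α)`.
-/

variable {α : Type*}

/-- Prefix closure of a language: `Init(L) = {u | ∃ v, u ++ v ∈ L}`. -/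
def InitL (L : Set (List α)) : Set (List α) := {u | ∃ v, u ++ v ∈ L}

/-- A language is prefix-closed if it contains its prefix closure. -/
def IsPrefixClosed (L : Set (List α)) : Prop := InitL L ⊆ L

/-- `M^pref`: the largest prefix-closed sublanguage of `M`. -/
def prefCl (M : Set (List α)) : Set (List α) := {w | w ∈ M ∧ ∀ p : List α, p <+: w → p ∈ M}

/-- The partial trace map `tr_L` for the `Σuc`-extension, as a graph relation:
`Tr L Suc w t` means `tr_L(w)` is defined and equals `t`. -/
inductive Tr (L : Set (List α)) (Suc : Set α) : List α → List α → Prop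
  | nil : Tr L Suc [] []
  | keep {p t : List α} {a : α} : Tr L Suc p t → t ++ [a] ∈ L → Tr L Suc (p ++ [a]) (t ++ [a])
  | drop {p t : List α} {a : α} : Tr L Suc p t → t ++ [a] ∉ L → a ∈ Suc → Tr L Suc (p ++ [a]) t

/-- `Σuc`-extension of a language: `Ext(L) = {w | tr_L(w) is defined}`. -/
def ExtL (L : Set (List α)) (Suc : Set α) : Set (List α) := {w | ∃ t, Tr L Suc w t}

open Classical in
/-- `π`: erase all letters of `Suo` from a word. -/
noncomputable def proj (Suo : Set α) : List α → List α
  | [] => []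
  | a :: w => if a ∈ Suo then proj Suo w else a :: proj Suo w

/-- `Σuo`-folding of a language. -/
def Fold (Suo : Set α) (L : Set (List α)) : Set (List α) :=
  {w | proj Suo w ∈ L ∧ ∀ (p : List α) (a : α), p ++ [a] <+: w → a ∈ Suo → proj Suo p ++ [a] ∈ L}

/-- `Real(L)` for a nonempty prefix-closed language `L`. -/
def RealL (Suo : Set α) (L : Set (List α)) : Set (List α) :=
  {w | ∀ (p q : List α) (a : α), w = p ++ [a] ++ q →
    ∃ u : List α, proj Suo u = proj Suo p ∧ u ++ [a] ∈ L}

/-- Concatenation of languages. -/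
def conc (L M : Set (List α)) : Set (List α) := {w | ∃ u ∈ L, ∃ v ∈ M, w = u ++ v}

/-- `A*`: all words whose letters all lie in the subalphabet `A`. -/
def ucStar (A : Set α) : Set (List α) := {w | ∀ a ∈ w, a ∈ A}

----------------- auxiliary -----------------
section PCO
open Classical
variable {Suc Suo : Set α}

lemma proj_cons (a : α) (w : List α) :
    proj Suo (a :: w) = if a ∈ Suo then proj Suo w else a :: proj Suo w := by
  simp [proj]

lemma proj_append (u v : List α) : proj Suo (u ++ v) = proj Suo u ++ proj Suo v := by
  induction u with
  | nil => simp [proj]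
  | cons a u ih => simp only [List.cons_append, proj_cons, ih]; split <;> simp

lemma proj_snoc_mem {a : α} (h : a ∈ Suo) (w : List α) :
    proj Suo (w ++ [a]) = proj Suo w := by
  simp [proj_append, proj_cons, h, proj]

lemma proj_snoc_not_mem {a : α} (h : a ∉ Suo) (w : List α) :
    proj Suo (w ++ [a]) = proj Suo w ++ [a] := by
  simp [proj_append, proj_cons, h, proj]

lemma proj_not_mem_suo : ∀ w : List α, ∀ a ∈ proj Suo w, a ∉ Suo := by
  intro w
  induction w with
  | nil => simp [proj]
  | cons b w ih =>
    intro a ha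
    rw [proj_cons] at ha
    by_cases hb : b ∈ Suo
    · exact ih a (by simpa [hb] using ha)
    · simp only [if_neg hb, List.mem_cons] at ha
      rcases ha with rfl | ha
      · exact hb
      · exact ih a ha

lemma proj_of_forall {w : List α} (h : ∀ a ∈ w, a ∉ Suo) : proj Suo w = w := by
  induction w with
  | nil => rfl
  | cons a w ih =>
    rw [proj_cons, if_neg (h a (by simp))]
    rw [ih (fun b hb => h b (by simp [hb]))]

lemma proj_idem (w : List α) : proj Suo (proj Suo w) = proj Suo w :=
  proj_of_forall (proj_not_mem_suo w)

/-- decomposition lifting along proj -/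
lemma proj_decomp {w p q : List α} {a : α} (h : proj Suo w = p ++ a :: q) :
    ∃ p' q' : List α, w = p' ++ a :: q' ∧ proj Suo p' = p := by
  induction w generalizing p with
  | nil => simp [proj] at h
  | cons b w ih =>
    rw [proj_cons] at h
    by_cases hb : b ∈ Suo
    · rw [if_pos hb] at h
      obtain ⟨p', q', hw, hp⟩ := ih h
      exact ⟨b :: p', q', by simp [hw], by rw [proj_cons, if_pos hb, hp]⟩
    · rw [if_neg hb] at h
      cases p with
      | nil =>
        simp at h
        exact ⟨[], w, by simp [h.1], by simp [proj]⟩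
      | cons c p =>
        simp at h
        obtain ⟨rfl, h2⟩ := h
        obtain ⟨p', q', hw, hp⟩ := ih h2
        exact ⟨b :: p', q', by simp [hw], by rw [proj_cons, if_neg hb, hp]⟩

/-- greedy closure function (input reversed) -/
noncomputable def FF (C : Set (List α)) : List α → List α
  | [] => []
  | a :: w => if FF C w ++ [a] ∈ C then FF C w ++ [a] else FF C w

noncomputable def Fc (C : Set (List α)) (v : List α) : List α := FF C v.reverse

lemma Fc_nil (C : Set (List α)) : Fc C [] = [] := rfl

open Classical in
lemma Fc_snoc (C : Set (List α)) (v : List α) (a : α) :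
    Fc C (v ++ [a]) = if Fc C v ++ [a] ∈ C then Fc C v ++ [a] else Fc C v := by
  simp [Fc, List.reverse_append, FF]
  exact if_congr Iff.rfl rfl rfl

lemma Fc_mem {C : Set (List α)} (hnil : [] ∈ C) (v : List α) : Fc C v ∈ C := by
  induction v using List.reverseRecOn with
  | nil => simpa [Fc_nil] using hnil
  | append_singleton v a ih =>
    rw [Fc_snoc]; split
    · assumption
    · exact ih

lemma Fc_fix {C : Set (List α)} (hpc : IsPrefixClosed C) : ∀ v ∈ C, Fc C v = v := by
  intro v hv
  induction v using List.reverseRecOn with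
  | nil => rfl
  | append_singleton v a ih =>
    have hvC : v ∈ C := hpc ⟨[a], hv⟩
    rw [Fc_snoc, ih hvC, if_pos hv]

lemma snoc_prefix_cases {l w : List α} {a : α} (h : l <+: w ++ [a]) :
    l <+: w ∨ l = w ++ [a] := Or.symm (List.prefix_concat_iff.mp h)

lemma snoc_inj {w p : List α} {a b : α} (h : w ++ [a] = p ++ [b]) : w = p ∧ a = b := by
  have := List.append_inj' h rfl
  simpa using this

lemma fold_nil {C : Set (List α)} (hnil : [] ∈ C) : ([] : List α) ∈ Fold Suo C := by
  constructor
  · simpa [proj] using hnil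
  · intro p a hp _
    have := hp.length_le
    simp at this

lemma fold_snoc {C : Set (List α)} (hpc : IsPrefixClosed C) {t : List α} {a : α}
    (ht : t ∈ Fold Suo C) : t ++ [a] ∈ Fold Suo C ↔ proj Suo t ++ [a] ∈ C := by
  constructor
  · intro h
    by_cases ha : a ∈ Suo
    · exact h.2 t a (List.prefix_refl _) ha
    · rw [← proj_snoc_not_mem ha]; exact h.1
  · intro h
    constructor
    · by_cases ha : a ∈ Suo
      · rw [proj_snoc_mem ha]; exact ht.1
      · rw [proj_snoc_not_mem ha]; exact h
    · intro p b hp hb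
      rcases snoc_prefix_cases hp with hp | hp
      · exact ht.2 p b hp hb
      · obtain ⟨rfl, rfl⟩ := snoc_inj hp
        exact h

lemma tr_spec {C : Set (List α)} (hpc : IsPrefixClosed C) (hnil : [] ∈ C) {w t : List α}
    (h : Tr (Fold Suo C) Suc w t) :
    t ∈ Fold Suo C ∧ proj Suo t = Fc C (proj Suo w) ∧
      ∀ q a, q ++ [a] <+: w → a ∉ Suc → Fc C (proj Suo q) ++ [a] ∈ C := by
  induction h with
  | nil =>
    refine ⟨fold_nil hnil, by simp [proj, Fc_nil], ?_⟩
    intro q a hq _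
    have := hq.length_le
    simp at this
  | @keep p t a htr hmem ih =>
    obtain ⟨ht, hpt, hpre⟩ := ih
    have hC : proj Suo t ++ [a] ∈ C := (fold_snoc hpc ht).mp hmem
    refine ⟨hmem, ?_, ?_⟩
    · by_cases ha : a ∈ Suo
      · rw [proj_snoc_mem ha, proj_snoc_mem ha, hpt]
      · rw [proj_snoc_not_mem ha, proj_snoc_not_mem ha, Fc_snoc, ← hpt, if_pos hC]
    · intro q b hq hb
      rcases snoc_prefix_cases hq with hq | hq
      · rcases snoc_prefix_cases (hq.trans ⟨[a], rfl⟩) with h' | h'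
        · exact hpre q b hq hb
        · exact hpre q b hq hb
      · obtain ⟨rfl, rfl⟩ := snoc_inj hq
        rw [← hpt]; exact hC
  | @drop p t a htr hmem ha ih =>
    obtain ⟨ht, hpt, hpre⟩ := ih
    have hC : proj Suo t ++ [a] ∉ C := fun h => hmem ((fold_snoc hpc ht).mpr h)
    refine ⟨ht, ?_, ?_⟩
    · by_cases hao : a ∈ Suo
      · rw [proj_snoc_mem hao, hpt]
      · rw [proj_snoc_not_mem hao, Fc_snoc, ← hpt, if_neg hC, hpt]
    · intro q b hq hb
      rcases snoc_prefix_cases hq with hq | hq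
      · exact hpre q b hq hb
      · obtain ⟨rfl, rfl⟩ := snoc_inj hq
        exact absurd ha hb

lemma tr_build {C : Set (List α)} (hpc : IsPrefixClosed C) (hnil : [] ∈ C) (w : List α)
    (hw : ∀ q a, q ++ [a] <+: w → a ∉ Suc → Fc C (proj Suo q) ++ [a] ∈ C) :
    ∃ t, Tr (Fold Suo C) Suc w t ∧ t ∈ Fold Suo C ∧ proj Suo t = Fc C (proj Suo w) := by
  induction w using List.reverseRecOn with
  | nil => exact ⟨[], Tr.nil, fold_nil hnil, by simp [proj, Fc_nil]⟩
  | append_singleton w a ih =>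
    obtain ⟨t, htr, ht, hpt⟩ := ih (fun q b hq hb => hw q b (hq.trans ⟨[a], rfl⟩) hb)
    by_cases hC : proj Suo t ++ [a] ∈ C
    · have hmem : t ++ [a] ∈ Fold Suo C := (fold_snoc hpc ht).mpr hC
      refine ⟨t ++ [a], htr.keep hmem, hmem, ?_⟩
      by_cases ha : a ∈ Suo
      · rw [proj_snoc_mem ha, proj_snoc_mem ha, hpt]
      · rw [proj_snoc_not_mem ha, proj_snoc_not_mem ha, Fc_snoc, ← hpt, if_pos hC]
    · have ha : a ∈ Suc := by
        by_contra hac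
        exact hC (hpt ▸ hw w a (List.prefix_refl _) hac)
      refine ⟨t, htr.drop (fun h => hC ((fold_snoc hpc ht).mp h)) ha, ht, ?_⟩
      by_cases hao : a ∈ Suo
      · rw [proj_snoc_mem hao, hpt]
      · rw [proj_snoc_not_mem hao, Fc_snoc, ← hpt, if_neg hC, hpt]

/-- Characterization of `Ext (Fold C)` for prefix-closed `C` containing `[]`. -/
lemma ext_fold_iff {C : Set (List α)} (hpc : IsPrefixClosed C) (hnil : [] ∈ C) (w : List α) :
    w ∈ ExtL (Fold Suo C) Suc ↔
      ∀ q a, q ++ [a] <+: w → a ∉ Suc → Fc C (proj Suo q) ++ [a] ∈ C := by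
  constructor
  · rintro ⟨t, htr⟩
    exact (tr_spec hpc hnil htr).2.2
  · intro h
    obtain ⟨t, htr, -⟩ := tr_build hpc hnil w h
    exact ⟨t, htr⟩

----------------- Z = Init(S)·Suc* -----------------
variable {S : Set (List α)}

lemma init_sub_Z : InitL S ⊆ conc (InitL S) (ucStar Suc) := by
  intro u hu
  exact ⟨u, hu, [], by simp [ucStar], by simp⟩

lemma Z_nil (hS : S.Nonempty) : ([] : List α) ∈ conc (InitL S) (ucStar Suc) := by
  obtain ⟨s, hs⟩ := hS
  exact init_sub_Z ⟨s, by simpa using hs⟩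

lemma Z_pc : IsPrefixClosed (conc (InitL S) (ucStar Suc)) := by
  rintro u ⟨v, s, hs, m, hm, huv⟩
  rcases List.append_eq_append_iff.mp huv with ⟨a', ha1, ha2⟩ | ⟨c, hc1, hc2⟩
  · obtain ⟨x, hx⟩ := hs
    refine init_sub_Z ⟨a' ++ x, ?_⟩
    rw [← List.append_assoc, ← ha1]
    exact hx
  · refine ⟨s, hs, c, ?_, hc1⟩
    intro b hb
    exact hm b (hc2 ▸ List.mem_append_left _ hb)

lemma Z_suc {u : List α} {a : α} (hu : u ∈ conc (InitL S) (ucStar Suc)) (ha : a ∈ Suc) :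
    u ++ [a] ∈ conc (InitL S) (ucStar Suc) := by
  obtain ⟨s, hs, m, hm, rfl⟩ := hu
  refine ⟨s, hs, m ++ [a], ?_, by simp⟩
  intro b hb
  rcases List.mem_append.mp hb with hb | hb
  · exact hm b hb
  · simp at hb; subst hb; exact ha

lemma Z_last {u : List α} {a : α} (hu : u ++ [a] ∈ conc (InitL S) (ucStar Suc))
    (ha : a ∉ Suc) : u ++ [a] ∈ InitL S := by
  obtain ⟨s, hs, m, hm, heq⟩ := hu
  rcases List.eq_nil_or_concat m with rfl | ⟨m', b, rfl⟩
  · rw [List.append_nil] at heq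
    exact heq ▸ hs
  · rw [List.concat_eq_append, ← List.append_assoc] at heq
    obtain ⟨-, rfl⟩ := snoc_inj heq
    exact absurd (hm a (by simp)) ha

----------------- Real(Z) -----------------

lemma real_pc {L : Set (List α)} : IsPrefixClosed (RealL Suo L) := by
  rintro u ⟨v, hv⟩
  intro p q a hu
  exact hv p (q ++ v) a (by rw [hu]; simp)

lemma real_nil {L : Set (List α)} : ([] : List α) ∈ RealL Suo L := by
  intro p q a h
  have := congrArg List.length h
  simp at this

lemma init_sub_real : InitL S ⊆ RealL Suo (conc (InitL S) (ucStar Suc)) := by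
  rintro w ⟨v, hv⟩ p q a hw
  refine ⟨p, rfl, init_sub_Z ⟨q ++ v, ?_⟩⟩
  rw [hw] at hv
  simpa using hv

lemma real_proj_Z (hS : S.Nonempty) {w : List α}
    (hw : w ∈ RealL Suo (conc (InitL S) (ucStar Suc))) :
    ∃ u ∈ conc (InitL S) (ucStar Suc), proj Suo u = proj Suo w := by
  rcases List.eq_nil_or_concat w with rfl | ⟨v, a, rfl⟩
  · exact ⟨[], Z_nil hS, rfl⟩
  · rw [List.concat_eq_append] at hw ⊢
    obtain ⟨u, hu, huZ⟩ := hw v [] a (by simp)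
    by_cases ha : a ∈ Suo
    · exact ⟨u, Z_pc ⟨[a], huZ⟩, by rw [hu, proj_snoc_mem ha]⟩
    · exact ⟨u ++ [a], huZ, by rw [proj_snoc_not_mem ha, proj_snoc_not_mem ha, hu]⟩

lemma real_suc (hS : S.Nonempty) {w : List α} {a : α}
    (hw : w ∈ RealL Suo (conc (InitL S) (ucStar Suc))) (ha : a ∈ Suc) :
    w ++ [a] ∈ RealL Suo (conc (InitL S) (ucStar Suc)) := by
  intro p q b hfact
  rcases List.eq_nil_or_concat q with rfl | ⟨q', c, rfl⟩
  · rw [List.append_nil] at hfact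
    obtain ⟨rfl, rfl⟩ := snoc_inj hfact
    obtain ⟨u, huZ, hu⟩ := real_proj_Z hS hw
    exact ⟨u, hu, Z_suc huZ ha⟩
  · have hfact' : w ++ [a] = (p ++ [b] ++ q') ++ [c] := by rw [hfact]; simp
    obtain ⟨rfl, rfl⟩ := snoc_inj hfact'
    exact hw p q' b rfl

lemma real_proj {w : List α}
    (hw : w ∈ RealL Suo (conc (InitL S) (ucStar Suc))) :
    proj Suo w ∈ RealL Suo (conc (InitL S) (ucStar Suc)) := by
  intro p q a hfact
  rw [List.append_assoc, List.singleton_append] at hfact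
  obtain ⟨p', q', rfl, hp⟩ := proj_decomp hfact
  obtain ⟨u, hu, huZ⟩ := hw p' q' a (by simp)
  refine ⟨u, ?_, huZ⟩
  rw [hu, hp, ← hp, proj_idem, hp]

/-- On (projections of) prefixes of a word of `Real(Z)`, the greedy map is the identity. -/
lemma real_fc_fix {w : List α}
    (hw : w ∈ RealL Suo (conc (InitL S) (ucStar Suc))) :
    ∀ q, q <+: w → Fc (RealL Suo (conc (InitL S) (ucStar Suc))) (proj Suo q) = proj Suo q := by
  intro q
  induction q using List.reverseRecOn with
  | nil => intro _; simp [proj, Fc_nil]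
  | append_singleton q' a ih =>
    intro hq
    have hq' : q' <+: w := (List.prefix_append q' [a]).trans hq
    by_cases ha : a ∈ Suo
    · rw [proj_snoc_mem ha, ih hq']
    · obtain ⟨r, hr⟩ := hq
      have hmem : q' ++ [a] ∈ RealL Suo (conc (InitL S) (ucStar Suc)) :=
        real_pc ⟨r, hr ▸ hw⟩
      have : proj Suo q' ++ [a] ∈ RealL Suo (conc (InitL S) (ucStar Suc)) := by
        have := real_proj hmem
        rwa [proj_snoc_not_mem ha] at this
      rw [proj_snoc_not_mem ha, Fc_snoc, ih hq', if_pos this]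

----------------- main theorem -----------------
end PCO

theorem pco_solvable_iff (P S : Set (List α)) (Suc Suo : Set α)
    (hS : S.Nonempty) (hsub : Suo ⊆ Suc)
    (hsolv : ∃ C : Set (List α), IsPrefixClosed C ∧ P ∩ C = S) :
    (∃ C : Set (List α), IsPrefixClosed C ∧ P ∩ C = S ∧ P ∩ ExtL (Fold Suo C) Suc = S) ↔
      RealL Suo (conc (InitL S) (ucStar Suc)) ⊆ Pᶜ ∪ S := by
  have hSP : S ⊆ P := by
    obtain ⟨C₀, -, hC₀⟩ := hsolv
    rw [← hC₀]; exact Set.inter_subset_left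
  set Z := conc (InitL S) (ucStar Suc) with hZ
  set R := RealL Suo Z with hR
  constructor
  · rintro ⟨C, hpc, hPC, hPE⟩ w hw
    by_cases hwP : w ∈ P
    swap
    · exact Or.inl hwP
    right
    have hSC : S ⊆ C := by rw [← hPC]; exact Set.inter_subset_right
    obtain ⟨s, hs⟩ := hS
    have hnil : ([] : List α) ∈ C := hpc ⟨s, by simpa using hSC hs⟩
    have hwE : w ∈ ExtL (Fold Suo C) Suc := by
      rw [ext_fold_iff hpc hnil]
      intro q a hq ha
      obtain ⟨r, hr⟩ := hq
      obtain ⟨u, hu, huZ⟩ := hw q r a hr.symm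
      obtain ⟨v, hv⟩ := Z_last huZ ha
      have hvE : u ++ [a] ++ v ∈ ExtL (Fold Suo C) Suc := by
        have : u ++ [a] ++ v ∈ S := hv
        rw [← hPE] at this
        exact this.2
      rw [ext_fold_iff hpc hnil] at hvE
      have := hvE u a ⟨v, rfl⟩ ha
      rwa [hu] at this
    rw [← hPE]
    exact ⟨hwP, hwE⟩
  · intro h
    refine ⟨R, real_pc, ?_, ?_⟩
    · apply Set.Subset.antisymm
      · intro w hw
        rcases h hw.2 with hc | hc
        · exact absurd hw.1 hc
        · exact hc
      · intro s hs
        exact ⟨hSP hs, init_sub_real ⟨[], by simpa using hs⟩⟩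
    · have hER : ExtL (Fold Suo R) Suc = R := by
        apply Set.Subset.antisymm
        · intro w hw
          rw [ext_fold_iff real_pc real_nil] at hw
          -- the greedy map is the identity on projections of prefixes of w
          have hfix : ∀ p, p <+: w → Fc R (proj Suo p) = proj Suo p := by
            intro p
            induction p using List.reverseRecOn with
            | nil => intro _; simp [proj, Fc_nil]
            | append_singleton p' a ih =>
              intro hp
              have hp' : p' <+: w := (List.prefix_append p' [a]).trans hp
              by_cases hao : a ∈ Suo
              · rw [proj_snoc_mem hao, ih hp']
              · rw [proj_snoc_not_mem hao, Fc_snoc, ih hp']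
                by_cases ha : a ∈ Suc
                · have hmem : proj Suo p' ∈ R := by
                    rw [← ih hp']; exact Fc_mem real_nil _
                  rw [if_pos (real_suc hS hmem ha)]
                · have := hw p' a hp ha
                  rw [ih hp'] at this
                  rw [if_pos this]
          intro p q a hfact
          have hpw : p ++ [a] <+: w := ⟨q, hfact.symm⟩
          by_cases ha : a ∈ Suc
          · have hmem : proj Suo p ∈ R := by
              rw [← hfix p ((List.prefix_append p [a]).trans hpw)]
              exact Fc_mem real_nil _
            obtain ⟨u, huZ, hu⟩ := real_proj_Z hS hmem
            exact ⟨u, by rw [hu, proj_idem], Z_suc huZ ha⟩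
          · have hPa : proj Suo p ++ [a] ∈ R := by
              have := hw p a hpw ha
              rwa [hfix p ((List.prefix_append p [a]).trans hpw)] at this
            obtain ⟨u, hu, huZ⟩ := hPa (proj Suo p) [] a (by simp)
            exact ⟨u, by rw [hu, proj_idem], huZ⟩
        · intro w hw
          rw [ext_fold_iff real_pc real_nil]
          intro q a hq ha
          rw [real_fc_fix hw q ((List.prefix_append q [a]).trans hq)]
          obtain ⟨r, hr⟩ := hq
          have hmem : q ++ [a] ∈ R := real_pc ⟨r, hr ▸ hw⟩
          have := real_proj hmem
          rwa [proj_snoc_not_mem (fun hx => ha (hsub hx))] at this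
      rw [hER]
      apply Set.Subset.antisymm
      · intro w hw
        rcases h hw.2 with hc | hc
        · exact absurd hw.1 hc
        · exact hc
      · intro s hs
        exact ⟨hSP hs, init_sub_real ⟨[], by simpa using hs⟩⟩
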